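/- Fix integers n ≥ 2 and N ≥ 1, maps f : ℝ^(2n−1) × ℝ → ℝ and ĉ : ℝ × ℝ^(2n−1) → ℝ, a dataset of triples (y_i⁺, ζ_i, u_i) ∈ ℝ × ℝ^(2n−1) × ℝ, i = 1,…,N, a class-K∞ function γ such that ‖ζ_i⁺ − Φ(ζ, y_i⁺)‖ ≤ γ(‖ζ_i − ζ‖) for every i and every ζ ∈ ℝ^(2n−1), and δ > 0. Suppose a sequence of sets (A^j)_{j≥0} in ℝ^(2n−1) is constructed as follows: A⁰ = ⋃_{i ∈ I₀} B̄(ζ_i⁺, r⁰_i) where I₀ ⊆ {1,…,N} and each radius r⁰_i ≥ 0 satisfies B̄(ζ_i⁺, r⁰_i) ⊆ S_δ; and for each j ≥ 0, A^{j+1} = ⋃_{i ∈ I_{j+1}} B̄(ζ_i, γ⁻¹(r^{j+1}_i)) where I_{j+1} ⊆ {1,…,N} and each radius r^{j+1}_i ≥ 0 satisfies B̄(ζ_i⁺, r^{j+1}_i) ⊆ A^j. Then A⁰ ⊆ S_δ and A^{j+1} ⊆ R⁻(A^j) for every j ≥ 0. -/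

import Mathlib

/-- The closed-loop one-step map with reference `yr`:
`Φ(ζ, yr) = (y₂,…,yₙ, f(ζ, ĉ(yr, ζ)), u₂,…,u_{n−1}, ĉ(yr, ζ))` for the augmented
state `ζ = (y₁,…,yₙ,u₁,…,u_{n−1}) ∈ ℝ^(2n−1)` (0-indexed coordinates). -/
noncomputable def Phi (n : ℕ) (f : EuclideanSpace ℝ (Fin (2*n-1)) → ℝ → ℝ)
    (chat : ℝ → EuclideanSpace ℝ (Fin (2*n-1)) → ℝ)
    (ζ : EuclideanSpace ℝ (Fin (2*n-1))) (yr : ℝ) : EuclideanSpace ℝ (Fin (2*n-1)) :=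
  WithLp.toLp 2 fun (k : Fin (2*n-1)) =>
    if (k : ℕ) = n - 1 then f ζ (chat yr ζ)
    else if h : (k : ℕ) = 2*n - 2 then chat yr ζ
    else ζ ⟨(k : ℕ) + 1, by have := k.isLt; omega⟩

/-- For a data triple `(y_i⁺, ζ_i, u_i)`, the shifted successor state
`ζ_i⁺ = (y_{i,2},…,y_{i,n}, y_i⁺, u_{i,2},…,u_{i,n−1}, u_i)`. -/
noncomputable def zplus (n : ℕ) (yp : ℝ) (ζ : EuclideanSpace ℝ (Fin (2*n-1))) (ui : ℝ) :
    EuclideanSpace ℝ (Fin (2*n-1)) :=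
  WithLp.toLp 2 fun (k : Fin (2*n-1)) =>
    if (k : ℕ) = n - 1 then yp
    else if h : (k : ℕ) = 2*n - 2 then ui
    else ζ ⟨(k : ℕ) + 1, by have := k.isLt; omega⟩

/-- Backward reachable set `R⁻(A) = {ζ : ∃ i, Φ(ζ, y_i⁺) ∈ A}`. -/
def Rminus (n N : ℕ) (f : EuclideanSpace ℝ (Fin (2*n-1)) → ℝ → ℝ)
    (chat : ℝ → EuclideanSpace ℝ (Fin (2*n-1)) → ℝ) (yd : Fin N → ℝ)
    (A : Set (EuclideanSpace ℝ (Fin (2*n-1)))) : Set (EuclideanSpace ℝ (Fin (2*n-1))) :=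
  {ζ | ∃ i : Fin N, Phi n f chat ζ (yd i) ∈ A}

/-- `S_δ = {ζ : |ζₙ| ≤ δ}` (the n-th coordinate is index `n-1`, 0-indexed). -/
def Sdelta (n : ℕ) (hn : 1 ≤ n) (δ : ℝ) : Set (EuclideanSpace ℝ (Fin (2*n-1))) :=
  {ζ | |ζ ⟨n - 1, by omega⟩| ≤ δ}

/-- Proposition 3: the recursively constructed sets
`A⁰ = ⋃_{i∈I₀} B̄(ζ_i⁺, r⁰_i)` (balls inside `S_δ`) and
`A^{j+1} = ⋃_{i∈I_{j+1}} B̄(ζ_i, γ⁻¹(r^{j+1}_i))` (with `B̄(ζ_i⁺, r^{j+1}_i) ⊆ A^j`)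
satisfy the defining property `A⁰ ⊆ S_δ` and `A^{j+1} ⊆ R⁻(A^j)`. -/
theorem stmt_4 (n N : ℕ) (hn : 2 ≤ n) (hN : 1 ≤ N)
    (f : EuclideanSpace ℝ (Fin (2*n-1)) → ℝ → ℝ)
    (chat : ℝ → EuclideanSpace ℝ (Fin (2*n-1)) → ℝ)
    (yd : Fin N → ℝ) (ζd : Fin N → EuclideanSpace ℝ (Fin (2*n-1))) (ud : Fin N → ℝ)
    (γ γinv : ℝ → ℝ)
    (hγ_cont : ContinuousOn γ (Set.Ici (0:ℝ)))
    (hγ_mono : StrictMonoOn γ (Set.Ici (0:ℝ)))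
    (hγ_zero : γ 0 = 0)
    (hγ_top : Filter.Tendsto γ Filter.atTop Filter.atTop)
    (hγinv_nonneg : ∀ r, 0 ≤ r → 0 ≤ γinv r)
    (hγinv_right : ∀ r, 0 ≤ r → γ (γinv r) = r)
    (hγinv_left : ∀ s, 0 ≤ s → γinv (γ s) = s)
    (hγ_bound : ∀ (i : Fin N) (ζ : EuclideanSpace ℝ (Fin (2*n-1))),
      ‖zplus n (yd i) (ζd i) (ud i) - Phi n f chat ζ (yd i)‖ ≤ γ ‖ζd i - ζ‖)
    (δ : ℝ) (hδ : 0 < δ)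
    (A : ℕ → Set (EuclideanSpace ℝ (Fin (2*n-1))))
    (I : ℕ → Set (Fin N)) (r : ℕ → Fin N → ℝ)
    (hr : ∀ j i, 0 ≤ r j i)
    (hA0 : A 0 = ⋃ i ∈ I 0, Metric.closedBall (zplus n (yd i) (ζd i) (ud i)) (r 0 i))
    (hball0 : ∀ i ∈ I 0,
      Metric.closedBall (zplus n (yd i) (ζd i) (ud i)) (r 0 i) ⊆ Sdelta n (by omega) δ)
    (hAsucc : ∀ j : ℕ,
      A (j+1) = ⋃ i ∈ I (j+1), Metric.closedBall (ζd i) (γinv (r (j+1) i)))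
    (hballsucc : ∀ (j : ℕ), ∀ i ∈ I (j+1),
      Metric.closedBall (zplus n (yd i) (ζd i) (ud i)) (r (j+1) i) ⊆ A j) :
    A 0 ⊆ Sdelta n (by omega) δ ∧
    ∀ j : ℕ, A (j+1) ⊆ Rminus n N f chat yd (A j) := by
  constructor
  · rw [hA0]
    exact Set.iUnion₂_subset hball0
  · intro j
    rw [hAsucc j]
    apply Set.iUnion₂_subset
    intro i hi ζ hζ
    refine ⟨i, hballsucc j i hi ?_⟩
    rw [Metric.mem_closedBall, dist_eq_norm]
    have h1 : ‖ζd i - ζ‖ ≤ γinv (r (j+1) i) := by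
      rw [Metric.mem_closedBall, dist_comm, dist_eq_norm] at hζ
      exact hζ
    have h2 : γ ‖ζd i - ζ‖ ≤ γ (γinv (r (j+1) i)) :=
      hγ_mono.monotoneOn (norm_nonneg _) (hγinv_nonneg _ (hr _ i)) h1
    rw [hγinv_right _ (hr _ i)] at h2
    rw [norm_sub_rev]
    exact le_trans (hγ_bound i ζ) h2
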